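/- Let T be a bounded operator on a Hilbert space and let λ be an isolated point of the spectrum of T that is an eigenvalue of a normal operator T. Then the Riesz projection P = (1/2πi) ∮_{C_λ} (ξ - T)^{-1} dξ, where C_λ is a small circle around λ containing no other spectral points, equals the orthogonal projection onto the λ-eigenspace of T. -/

import Mathlib

open Metric

lemma clm_circleIntegral_comm
    {E F : Type*} [NormedAddCommGroup E] [NormedSpace ℂ E] [NormedAddCommGroup F]
    [NormedSpace ℂ F] [CompleteSpace E] [CompleteSpace F]
    (L : E →L[ℂ] F) {f : ℂ → E} {c : ℂ} {R : ℝ} (hf : CircleIntegrable f c R) :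
    L (∮ z in C(c, R), f z) = ∮ z in C(c, R), L (f z) := by
  simp only [circleIntegral]
  rw [← L.intervalIntegral_comp_comm hf.out]
  simp [L.map_smul]

set_option maxHeartbeats 1000000 in
theorem riesz_projection_eq_orthogonalProjection
    {H : Type*} [NormedAddCommGroup H] [InnerProductSpace ℂ H] [CompleteSpace H]
    (T : H →L[ℂ] H) (hT : IsStarNormal T)
    (lam : ℂ) (hlam : lam ∈ spectrum ℂ T)
    (heig : Module.End.HasEigenvalue (↑T : H →ₗ[ℂ] H) lam)
    (r : ℝ) (hr : 0 < r)
    (hiso : spectrum ℂ T ∩ Metric.closedBall lam r = {lam})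
    (K : Submodule ℂ H) (hK : K = Module.End.eigenspace (↑T : H →ₗ[ℂ] H) lam)
    [K.HasOrthogonalProjection] :
    (2 * (Real.pi : ℂ) * Complex.I)⁻¹ •
        (∮ ξ in C(lam, r), Ring.inverse (ξ • (1 : H →L[ℂ] H) - T)) =
      K.subtypeL.comp K.orthogonalProjectionOnto := by
  classical
  -- basic spectral facts
  have hsph : ∀ ξ ∈ sphere lam r, ξ ∉ spectrum ℂ T := by
    intro ξ hξ hmem
    have : ξ ∈ spectrum ℂ T ∩ closedBall lam r := ⟨hmem, sphere_subset_closedBall hξ⟩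
    rw [hiso] at this
    rw [Set.mem_singleton_iff] at this
    subst this
    rw [mem_sphere, dist_self] at hξ
    exact hr.ne hξ
  have hball : ∀ z : ℂ, z ∈ spectrum ℂ T → ((z ∈ ball lam r) ↔ z = lam) := by
    intro z hz
    constructor
    · intro h
      have : z ∈ spectrum ℂ T ∩ closedBall lam r := ⟨hz, ball_subset_closedBall h⟩
      rw [hiso] at this; exact this
    · rintro rfl; exact mem_ball_self hr
  -- the characteristic function χ of {lam} as a continuous map on the spectrum
  have hU : IsClopen {z : spectrum ℂ T | (z : ℂ) ∈ ball lam r} := by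
    constructor
    · have : {z : spectrum ℂ T | (z : ℂ) ∈ ball lam r}
          = Subtype.val ⁻¹' closedBall lam r := by
        ext z
        simp only [Set.mem_setOf_eq, Set.mem_preimage]
        constructor
        · exact fun h => ball_subset_closedBall h
        · intro h
          have : (z : ℂ) = lam := by
            have : (z : ℂ) ∈ spectrum ℂ T ∩ closedBall lam r := ⟨z.2, h⟩
            rw [hiso] at this; exact this
          rw [this]; exact mem_ball_self hr
      rw [this]
      exact IsClosed.preimage continuous_subtype_val isClosed_closedBall
    · exact isOpen_ball.preimage continuous_subtype_val
  let χ : C(spectrum ℂ T, ℂ) :=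
    ⟨fun z => if (z : ℂ) ∈ ball lam r then 1 else 0, by
      refine Continuous.if ?_ continuous_const continuous_const
      intro a ha
      rw [hU.frontier_eq] at ha
      exact absurd ha (Set.notMem_empty a)⟩
  -- the continuous functional calculus as a continuous linear map
  let Φ := cfcHom hT (R := ℂ)
  let L : C(spectrum ℂ T, ℂ) →L[ℂ] (H →L[ℂ] H) :=
    { toLinearMap := Φ.toLinearMap, cont := (cfcHom_isClosedEmbedding hT).continuous }
  have hLmul : ∀ g₁ g₂ : C(spectrum ℂ T, ℂ), L (g₁ * g₂) = L g₁ * L g₂ := fun g₁ g₂ =>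
    map_mul Φ g₁ g₂
  have hLid : L ((ContinuousMap.id ℂ).restrict (spectrum ℂ T)) = T := cfcHom_id hT
  have hLone : L 1 = 1 := map_one Φ
  -- the resolvent as a C(spectrum, ℂ)-valued function
  let f : ℂ → C(spectrum ℂ T, ℂ) := fun ξ =>
    if h : ξ ∈ spectrum ℂ T then 0 else
      ⟨fun z => (ξ - z)⁻¹, Continuous.inv₀ (continuous_const.sub continuous_subtype_val)
        (fun z => sub_ne_zero.2 (fun e => h (e ▸ z.2)))⟩
  have hf_apply : ∀ ξ ∉ spectrum ℂ T, ∀ z : spectrum ℂ T, f ξ z = (ξ - z)⁻¹ := by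
    intro ξ hξ z
    simp only [f, dif_neg hξ]
    rfl
  -- continuity along the circle
  let G : C(ℝ × spectrum ℂ T, ℂ) :=
    ⟨fun p => (circleMap lam r p.1 - p.2)⁻¹, by
      refine Continuous.inv₀ ?_ ?_
      · exact ((continuous_circleMap lam r).comp continuous_fst).sub
          (continuous_subtype_val.comp continuous_snd)
      · rintro ⟨θ, z⟩
        refine sub_ne_zero.2 fun e => hsph (circleMap lam r θ) ?_ (e ▸ z.2.out)
        simpa [abs_of_pos hr] using circleMap_mem_sphere' lam r θ⟩
  have hGf : (fun θ => f (circleMap lam r θ)) = ⇑G.curry := by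
    funext θ
    ext z
    rw [hf_apply _ (hsph _ (by simpa [abs_of_pos hr] using circleMap_mem_sphere' lam r θ))]
    rfl
  have hfint : CircleIntegrable f lam r := by
    rw [CircleIntegrable, hGf]
    exact G.curry.continuous.intervalIntegrable _ _
  -- resolvent identity on the sphere
  have hres : ∀ ξ ∈ sphere lam r, Ring.inverse (ξ • (1 : H →L[ℂ] H) - T) = L (f ξ) := by
    intro ξ hξ
    have hξs : ξ ∉ spectrum ℂ T := hsph ξ hξ
    set g : C(spectrum ℂ T, ℂ) :=
      algebraMap ℂ C(spectrum ℂ T, ℂ) ξ - (ContinuousMap.id ℂ).restrict (spectrum ℂ T) with hg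
    have hLg : L g = ξ • (1 : H →L[ℂ] H) - T := by
      rw [hg, map_sub, hLid]
      congr 1
      show Φ (algebraMap ℂ C(spectrum ℂ T, ℂ) ξ) = ξ • (1 : H →L[ℂ] H)
      rw [AlgHomClass.commutes Φ ξ]
      exact Algebra.algebraMap_eq_smul_one ξ
    have hmul1 : f ξ * g = 1 := by
      ext z
      have hne : ξ - (z : ℂ) ≠ 0 := sub_ne_zero.2 (fun e => hξs (e ▸ z.2.out))
      simp [hf_apply ξ hξs z, hg, inv_mul_cancel₀ hne]
    have hmul2 : g * f ξ = 1 := by rw [mul_comm]; exact hmul1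
    have : IsUnit (ξ • (1 : H →L[ℂ] H) - T) := by
      refine ⟨⟨ξ • (1 : H →L[ℂ] H) - T, L (f ξ), ?_, ?_⟩, rfl⟩
      · rw [← hLg, ← hLmul, hmul2, hLone]
      · rw [← hLg, ← hLmul, hmul1, hLone]
    obtain ⟨u, hu⟩ := this
    rw [← hu, Ring.inverse_unit]
    have : (u : H →L[ℂ] H) * L (f ξ) = 1 := by rw [hu, ← hLg, ← hLmul, hmul2, hLone]
    calc (↑u⁻¹ : H →L[ℂ] H) = ↑u⁻¹ * ((u : H →L[ℂ] H) * L (f ξ)) := by rw [this, mul_one]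
    _ = L (f ξ) := by rw [← mul_assoc, u.inv_mul, one_mul]
  -- the circle integral of f equals (2πi) • χ
  have hint : (∮ ξ in C(lam, r), f ξ) = (2 * (Real.pi : ℂ) * Complex.I) • χ := by
    ext z
    have hz : (z : ℂ) ∈ spectrum ℂ T := z.2
    have heval := clm_circleIntegral_comm (ContinuousMap.evalCLM ℂ z) hfint
    have h1 : (∮ ξ in C(lam, r), f ξ) z = ∮ ξ in C(lam, r), (f ξ) z := heval
    have h2 : (∮ ξ in C(lam, r), (f ξ) z) = ∮ ξ in C(lam, r), (ξ - (z : ℂ))⁻¹ := by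
      refine circleIntegral.integral_congr hr.le fun ξ hξ => ?_
      exact hf_apply ξ (hsph ξ hξ) z
    by_cases hzb : (z : ℂ) = lam
    · have hmem : (z : ℂ) ∈ ball lam r := by rw [hzb]; exact mem_ball_self hr
      rw [ContinuousMap.smul_apply]
      show (∮ ξ in C(lam, r), f ξ) z = _ • (if (z : ℂ) ∈ ball lam r then (1:ℂ) else 0)
      rw [h1, h2, if_pos hmem, circleIntegral.integral_sub_inv_of_mem_ball hmem, smul_eq_mul,
        mul_one]
    · have hnmem : (z : ℂ) ∉ closedBall lam r := fun h => hzb (by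
        have : (z : ℂ) ∈ spectrum ℂ T ∩ closedBall lam r := ⟨hz, h⟩
        rw [hiso] at this; exact this)
      have hzero : (∮ ξ in C(lam, r), (ξ - (z : ℂ))⁻¹) = 0 := by
        refine Complex.circleIntegral_eq_zero_of_differentiable_on_off_countable hr.le
          Set.countable_empty ?_ ?_
        · refine ContinuousOn.inv₀ (continuousOn_id.sub continuousOn_const) fun ξ hξ => ?_
          exact sub_ne_zero.2 fun e => hnmem (e ▸ hξ)
        · intro ξ hξ
          refine DifferentiableAt.inv (differentiableAt_id.sub (differentiableAt_const _)) ?_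
          exact sub_ne_zero.2 fun e => hnmem (e ▸ ball_subset_closedBall hξ.1)
      rw [ContinuousMap.smul_apply]
      show (∮ ξ in C(lam, r), f ξ) z = _ • (if (z : ℂ) ∈ ball lam r then (1:ℂ) else 0)
      have hnb : (z : ℂ) ∉ ball lam r := fun h => hnmem (ball_subset_closedBall h)
      rw [h1, h2, hzero, if_neg hnb, smul_eq_mul, mul_zero]
  -- key identity: the Riesz projection equals cfc of χ
  have key : (2 * (Real.pi : ℂ) * Complex.I)⁻¹ •
      (∮ ξ in C(lam, r), Ring.inverse (ξ • (1 : H →L[ℂ] H) - T)) = L χ := by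
    rw [circleIntegral.integral_congr hr.le hres,
      ← clm_circleIntegral_comm L hfint, hint, map_smul, smul_smul,
      inv_mul_cancel₀ Complex.two_pi_I_ne_zero, one_smul]
  rw [key]
  -- χ is self-adjoint
  have hstarχ : star χ = χ := by
    ext z
    show star (if (z : ℂ) ∈ ball lam r then (1:ℂ) else 0)
        = (if (z : ℂ) ∈ ball lam r then (1:ℂ) else 0)
    split <;> simp
  have hstar : star (L χ) = L χ := by
    show star (Φ χ) = Φ χ
    rw [← map_star Φ χ, hstarχ]
  -- range of L χ is contained in K
  have hrange : ∀ x : H, L χ x ∈ K := by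
    intro x
    have hgχ : ((ContinuousMap.id ℂ).restrict (spectrum ℂ T)
        - algebraMap ℂ C(spectrum ℂ T, ℂ) lam) * χ = 0 := by
      ext z
      show ((z : ℂ) - lam) * (if (z : ℂ) ∈ ball lam r then (1:ℂ) else 0) = 0
      by_cases hzb : (z : ℂ) ∈ ball lam r
      · have : (z : ℂ) = lam := (hball _ z.2).1 hzb
        rw [if_pos hzb, this, sub_self, zero_mul]
      · rw [if_neg hzb, mul_zero]
    have hTP : (T - lam • 1) * L χ = 0 := by
      have hLg2 : L ((ContinuousMap.id ℂ).restrict (spectrum ℂ T)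
          - algebraMap ℂ C(spectrum ℂ T, ℂ) lam) = T - lam • (1 : H →L[ℂ] H) := by
        rw [map_sub, hLid]
        congr 1
        show Φ (algebraMap ℂ C(spectrum ℂ T, ℂ) lam) = lam • (1 : H →L[ℂ] H)
        rw [AlgHomClass.commutes Φ lam]
        exact Algebra.algebraMap_eq_smul_one lam
      rw [← hLg2, ← hLmul, hgχ, map_zero]
    have := congrArg (fun S : H →L[ℂ] H => S x) hTP
    simp only [ContinuousLinearMap.mul_apply, ContinuousLinearMap.sub_apply,
      ContinuousLinearMap.smul_apply, ContinuousLinearMap.one_apply,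
      ContinuousLinearMap.zero_apply] at this
    rw [hK, Module.End.mem_eigenspace_iff]
    show T (L χ x) = lam • L χ x
    linear_combination (norm := module) this
  -- L χ fixes eigenvectors
  have hRint : CircleIntegrable (fun ξ => Ring.inverse (ξ • (1 : H →L[ℂ] H) - T)) lam r := by
    rw [CircleIntegrable]
    have : (fun θ => Ring.inverse (circleMap lam r θ • (1 : H →L[ℂ] H) - T))
        = fun θ => L (G.curry θ) := by
      funext θ
      rw [hres _ (by simpa [abs_of_pos hr] using circleMap_mem_sphere' lam r θ)]
      congr 1
      exact congrFun hGf θ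
    rw [this]
    exact (L.continuous.comp G.curry.continuous).intervalIntegrable _ _
  have hfix : ∀ x, x ∈ K → L χ x = x := by
    intro x hx
    rw [hK, Module.End.mem_eigenspace_iff] at hx
    have hTx : T x = lam • x := hx
    have hresx : ∀ ξ ∈ sphere lam r, Ring.inverse (ξ • (1 : H →L[ℂ] H) - T) x
        = (ξ - lam)⁻¹ • x := by
      intro ξ hξ
      have hξs : ξ ∉ spectrum ℂ T := hsph ξ hξ
      have hne : ξ - lam ≠ 0 := sub_ne_zero.2 fun e => hξs (e ▸ hlam)
      have hu : IsUnit (ξ • (1 : H →L[ℂ] H) - T) := by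
        have := spectrum.notMem_iff.mp hξs
        rwa [Algebra.algebraMap_eq_smul_one] at this
      obtain ⟨u, hu⟩ := hu
      have hy : (ξ • (1 : H →L[ℂ] H) - T) ((ξ - lam)⁻¹ • x) = x := by
        simp only [ContinuousLinearMap.sub_apply, ContinuousLinearMap.smul_apply,
          ContinuousLinearMap.one_apply, map_smul, hTx]
        rw [← sub_smul, smul_smul, inv_mul_cancel₀ hne, one_smul]
      rw [← hu] at hy ⊢
      rw [Ring.inverse_unit]
      calc (↑u⁻¹ : H →L[ℂ] H) x = (↑u⁻¹ : H →L[ℂ] H) ((u : H →L[ℂ] H) ((ξ - lam)⁻¹ • x)) := by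
            rw [hy]
      _ = ((↑u⁻¹ * ↑u : H →L[ℂ] H)) ((ξ - lam)⁻¹ • x) := rfl
      _ = (ξ - lam)⁻¹ • x := by rw [u.inv_mul, ContinuousLinearMap.one_apply]
    have happly := clm_circleIntegral_comm
      (ContinuousLinearMap.apply ℂ H x : (H →L[ℂ] H) →L[ℂ] H) hRint
    have h3 : (∮ ξ in C(lam, r), Ring.inverse (ξ • (1 : H →L[ℂ] H) - T) x)
        = ∮ ξ in C(lam, r), (ξ - lam)⁻¹ • x :=
      circleIntegral.integral_congr hr.le fun ξ hξ => hresx ξ hξ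
    have hsint : CircleIntegrable (fun ξ => (ξ - lam)⁻¹) lam r := by
      rw [show r = |r| from (abs_of_pos hr).symm, circleIntegrable_sub_inv_iff]
      right
      simp [abs_of_pos hr, mem_sphere, hr.ne]
    have h4 : (∮ ξ in C(lam, r), (ξ - lam)⁻¹ • x)
        = (∮ ξ in C(lam, r), (ξ - lam)⁻¹) • x := by
      calc (∮ ξ in C(lam, r), (ξ - lam)⁻¹ • x)
          = ∮ ξ in C(lam, r), (ContinuousLinearMap.toSpanSingleton ℂ x) ((ξ - lam)⁻¹) := by
            simp only [ContinuousLinearMap.toSpanSingleton_apply]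
      _ = (ContinuousLinearMap.toSpanSingleton ℂ x) (∮ ξ in C(lam, r), (ξ - lam)⁻¹) :=
            (clm_circleIntegral_comm (ContinuousLinearMap.toSpanSingleton ℂ x) hsint).symm
      _ = (∮ ξ in C(lam, r), (ξ - lam)⁻¹) • x := ContinuousLinearMap.toSpanSingleton_apply ℂ x _
    rw [← key]
    show (2 * (Real.pi : ℂ) * Complex.I)⁻¹ •
      ((∮ ξ in C(lam, r), Ring.inverse (ξ • (1 : H →L[ℂ] H) - T)) x) = x
    rw [show ((∮ ξ in C(lam, r), Ring.inverse (ξ • (1 : H →L[ℂ] H) - T)) x)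
        = ∮ ξ in C(lam, r), Ring.inverse (ξ • (1 : H →L[ℂ] H) - T) x from happly,
      h3, h4, circleIntegral.integral_sub_inv_of_mem_ball (mem_ball_self hr),
      smul_smul, inv_mul_cancel₀ Complex.two_pi_I_ne_zero, one_smul]
  -- conclude
  ext x
  have h1 : L χ ((K.orthogonalProjectionOnto x : H)) = (K.orthogonalProjectionOnto x : H) :=
    hfix _ (K.orthogonalProjectionOnto x).2
  have h2 : L χ (x - (K.orthogonalProjectionOnto x : H)) = 0 := by
    set z := x - (K.orthogonalProjectionOnto x : H) with hzdef
    have hzo : z ∈ Kᗮ := Submodule.sub_starProjection_mem_orthogonal x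
    have hall : ∀ w : H, inner ℂ (L χ z) w = (0 : ℂ) := by
      intro w
      calc inner ℂ (L χ z) w
          = inner ℂ ((ContinuousLinearMap.adjoint (L χ)) z) w := by
            rw [← ContinuousLinearMap.star_eq_adjoint, hstar]
      _ = inner ℂ z (L χ w) := ContinuousLinearMap.adjoint_inner_left _ _ _
      _ = 0 := (Submodule.mem_orthogonal' K z).mp hzo _ (hrange w)
    exact inner_self_eq_zero.mp (hall (L χ z))
  show L χ x = (K.orthogonalProjectionOnto x : H)
  calc L χ x = L χ ((K.orthogonalProjectionOnto x : H) + (x - (K.orthogonalProjectionOnto x : H))) := by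
        rw [add_sub_cancel]
  _ = L χ ((K.orthogonalProjectionOnto x : H)) + L χ (x - (K.orthogonalProjectionOnto x : H)) :=
        map_add _ _ _
  _ = (K.orthogonalProjectionOnto x : H) := by rw [h1, h2, add_zero]
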